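/- Under a uniform data distribution on a finite dataset D and Gaussian observation model q(y|x) = N(y; Wx, σ²I), the slack of the Jensen bound equals the average posterior KL divergence: M(W,D,σ) - C(W,D,σ) = (1/|D|) Σ_{x_i ∈ D} E_{y ~ q(·|x_i)}[KL(Q_data(X) || Q(X|y))] ≥ 0, where Q(X|y) is the exact posterior over the finite dataset. -/

import Mathlib

open MeasureTheory Real

/-! Auxiliary definitions and lemmas -/

noncomputable def gG {m : ℕ} (b : ℝ) (a : Fin m → ℝ) (y : Fin m → ℝ) : ℝ :=
  Real.exp (-b * ∑ k, (y k - a k) ^ 2)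

noncomputable def qS {m : ℕ} (a : Fin m → ℝ) (y : Fin m → ℝ) : ℝ :=
  ∑ k, (y k - a k) ^ 2

lemma gG_pos {m : ℕ} (b : ℝ) (a y : Fin m → ℝ) : 0 < gG b a y := Real.exp_pos _

lemma qS_nonneg {m : ℕ} (a y : Fin m → ℝ) : 0 ≤ qS a y :=
  Finset.sum_nonneg fun k _ => sq_nonneg _

lemma gG_le_one {m : ℕ} {b : ℝ} (hb : 0 ≤ b) (a y : Fin m → ℝ) : gG b a y ≤ 1 := by
  rw [gG, Real.exp_le_one_iff, neg_mul, neg_nonpos]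
  exact mul_nonneg hb (qS_nonneg a y)

lemma log_gG {m : ℕ} (b : ℝ) (a y : Fin m → ℝ) : Real.log (gG b a y) = -b * qS a y :=
  Real.log_exp _

lemma gG_continuous {m : ℕ} (b : ℝ) (a : Fin m → ℝ) : Continuous (gG b a) := by
  apply Real.continuous_exp.comp
  exact (continuous_const.mul (continuous_finset_sum _ fun k _ =>
    ((continuous_apply k).sub continuous_const).pow 2) : Continuous fun y : Fin m → ℝ => _)

lemma aux1 {b : ℝ} (hb : 0 < b) (a : ℝ) :
    Integrable (fun t : ℝ => Real.exp (-b * (t - a) ^ 2)) :=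
  (integrable_exp_neg_mul_sq hb).comp_sub_right a

lemma aux2 {b : ℝ} (hb : 0 < b) (a c : ℝ) :
    Integrable (fun t : ℝ => (t - c) ^ 2 * Real.exp (-b * (t - a) ^ 2)) := by
  have h2 : Integrable (fun s : ℝ => s ^ 2 * Real.exp (-b * s ^ 2)) := by
    have := integrable_rpow_mul_exp_neg_mul_sq hb (show (-1:ℝ) < 2 by norm_num)
    simpa [Real.rpow_two] using this
  have h1 := integrable_mul_exp_neg_mul_sq hb
  have h0 := integrable_exp_neg_mul_sq hb
  have base : Integrable (fun s : ℝ => (s + (a - c)) ^ 2 * Real.exp (-b * s ^ 2)) := by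
    have e : (fun s : ℝ => (s + (a - c)) ^ 2 * Real.exp (-b * s ^ 2)) =
        fun s => s ^ 2 * Real.exp (-b * s ^ 2) +
          (2 * (a - c) * (s * Real.exp (-b * s ^ 2)) + (a - c) ^ 2 * Real.exp (-b * s ^ 2)) := by
      funext s; ring
    rw [e]
    exact h2.add ((h1.const_mul _).add (h0.const_mul _))
  have := base.comp_sub_right a
  have e : (fun t : ℝ => (t - a + (a - c)) ^ 2 * Real.exp (-b * (t - a) ^ 2)) =
      fun t => (t - c) ^ 2 * Real.exp (-b * (t - a) ^ 2) := by
    funext t; ring_nf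
  rwa [e] at this

lemma aux2' {b : ℝ} (hb : 0 < b) (a c : ℝ) (P : Prop) [Decidable P] :
    Integrable (fun t : ℝ => (if P then (t - c) ^ 2 else 1) * Real.exp (-b * (t - a) ^ 2)) := by
  by_cases h : P
  · simp only [if_pos h]; exact aux2 hb a c
  · simp only [if_neg h, one_mul]; exact aux1 hb a

lemma gauss_int {m : ℕ} {b : ℝ} (hb : 0 < b) (a : Fin m → ℝ) :
    Integrable (gG b a) := by
  have e : gG b a = fun y => ∏ k, Real.exp (-b * (y k - a k) ^ 2) := by
    funext y
    rw [gG, Finset.mul_sum, Real.exp_sum]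
  rw [e]
  exact Integrable.fintype_prod (fun k => aux1 hb (a k))

lemma gauss_sq_int {m : ℕ} {b : ℝ} (hb : 0 < b) (a c : Fin m → ℝ) (j : Fin m) :
    Integrable (fun y : Fin m → ℝ => (y j - c j) ^ 2 * gG b a y) := by
  have e : (fun y : Fin m → ℝ => (y j - c j) ^ 2 * gG b a y) =
      fun y => ∏ k, ((if k = j then (y k - c k) ^ 2 else 1) * Real.exp (-b * (y k - a k) ^ 2)) := by
    funext y
    rw [Finset.prod_mul_distrib, Finset.prod_ite_eq' Finset.univ j (fun k => (y k - c k) ^ 2),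
      gG, Finset.mul_sum, Real.exp_sum]
    simp
  rw [e]
  exact Integrable.fintype_prod (fun k => aux2' hb (a k) (c k) (k = j))

lemma gauss_sum_sq_int {m : ℕ} {b : ℝ} (hb : 0 < b) (a c : Fin m → ℝ) :
    Integrable (fun y : Fin m → ℝ => qS c y * gG b a y) := by
  have e : (fun y : Fin m → ℝ => qS c y * gG b a y) =
      fun y => ∑ j, (y j - c j) ^ 2 * gG b a y := by
    funext y; rw [qS, Finset.sum_mul]
  rw [e]
  exact integrable_finset_sum _ (fun j _ => gauss_sq_int hb a c j)


lemma alg_lemma {N : ℕ} (hNne : (N:ℝ) ≠ 0) (A C : Fin N → ℝ) (B : Fin N → Fin N → ℝ) (L : ℝ)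
    (h : ∀ i, C i = A i - (1/(N:ℝ)) * ∑ j, B i j) :
    ((1/(N:ℝ)) * ∑ i, A i + L) - ((1/(N:ℝ)^2) * ∑ i, ∑ j, B i j + L)
      = (1/(N:ℝ)) * ∑ i, C i := by
  simp only [h]
  rw [Finset.sum_sub_distrib, ← Finset.mul_sum]
  field_simp
  ring

/-- under a uniform data distribution on a finite dataset and Gaussian
observation model, the slack of the Jensen bound equals the average posterior KL
divergence: M(W,D,σ) - C(W,D,σ) = (1/|D|) Σ_i E_{y~q(·|x_i)}[KL(Q_data ‖ Q(·|y))] ≥ 0,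
where Q(x_j|y) = q(y|x_j)/Σ_k q(y|x_k) is the exact posterior over the dataset. -/
theorem jensen_slack_eq_avg_posterior_kl
    {n m N : ℕ} (hN : 0 < N)
    (x : Fin N → (Fin n → ℝ)) (W : Matrix (Fin m) (Fin n) ℝ)
    (σ : ℝ) (hσ : 0 < σ)
    (φ : (Fin m → ℝ) → ℝ)
    (hφ : φ = fun u => (2 * π * σ ^ 2) ^ (-(m : ℝ) / 2) *
      Real.exp (-(∑ k, u k ^ 2) / (2 * σ ^ 2)))
    (Mobj Cobj : ℝ)
    (hM : Mobj = (1 / (N : ℝ)) * ∑ i, (∫ y, φ (y - W.mulVec (x i)) *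
            Real.log ((1 / (N : ℝ)) * ∑ k, φ (y - W.mulVec (x k))))
          + (1 / 2) * Real.log (2 * π * Real.exp 1 * σ ^ 2))
    (hC : Cobj = (1 / (N : ℝ) ^ 2) * ∑ i, ∑ j, (∫ y, φ (y - W.mulVec (x i)) *
            Real.log (φ (y - W.mulVec (x j))))
          + (1 / 2) * Real.log (2 * π * Real.exp 1 * σ ^ 2))
    -- discrete KL divergence between the uniform prior and the exact posterior given y
    (KLy : (Fin m → ℝ) → ℝ)
    (hKL : KLy = fun y => ∑ j, (1 / (N : ℝ)) *
      Real.log ((1 / (N : ℝ)) /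
        (φ (y - W.mulVec (x j)) / ∑ k, φ (y - W.mulVec (x k))))) :
    Mobj - Cobj = (1 / (N : ℝ)) * ∑ i, ∫ y, φ (y - W.mulVec (x i)) * KLy y
    ∧ 0 ≤ Mobj - Cobj := by
  have hNR : (0:ℝ) < N := Nat.cast_pos.mpr hN
  have hNne : (N:ℝ) ≠ 0 := ne_of_gt hNR
  have hNinv : (0:ℝ) < 1 / (N:ℝ) := one_div_pos.mpr hNR
  set b : ℝ := (2 * σ ^ 2)⁻¹ with hbdef
  have hb : 0 < b := by rw [hbdef]; positivity
  set c0 : ℝ := (2 * π * σ ^ 2) ^ (-(m : ℝ) / 2) with hc0def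
  have hc0 : 0 < c0 := by
    rw [hc0def]
    exact Real.rpow_pos_of_pos (by positivity) _
  set a : Fin N → Fin m → ℝ := fun i => W.mulVec (x i) with hadef
  -- rewrite φ applications
  have hφv : ∀ (i : Fin N) (y : Fin m → ℝ), φ (y - a i) = c0 * gG b (a i) y := by
    intro i y
    rw [hφ]
    simp only [gG, Pi.sub_apply]
    congr 2
    rw [hbdef]
    ring
  simp only [hφv, show ∀ (i : Fin N) (y : Fin m → ℝ), φ (y - W.mulVec (x i)) = c0 * gG b (a i) y from hφv] at hM hC hKL
  -- positivity facts
  have hψpos : ∀ (i : Fin N) (y : Fin m → ℝ), 0 < c0 * gG b (a i) y :=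
    fun i y => mul_pos hc0 (gG_pos _ _ _)
  have hSpos : ∀ y : Fin m → ℝ, 0 < ∑ k, c0 * gG b (a k) y :=
    fun y => Finset.sum_pos (fun k _ => hψpos k y) ⟨⟨0, hN⟩, Finset.mem_univ _⟩
  -- KL pointwise formula
  have hKL' : ∀ y : Fin m → ℝ, KLy y =
      Real.log ((1 / (N:ℝ)) * ∑ k, c0 * gG b (a k) y)
        - (1 / (N:ℝ)) * ∑ j, Real.log (c0 * gG b (a j) y) := by
    intro y
    rw [hKL]
    have hS := hSpos y
    have e : ∀ j : Fin N, (1 / (N:ℝ)) *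
        Real.log ((1 / (N:ℝ)) / (c0 * gG b (a j) y / ∑ k, c0 * gG b (a k) y)) =
        (1 / (N:ℝ)) * (Real.log (1 / (N:ℝ)) + Real.log (∑ k, c0 * gG b (a k) y))
          - (1 / (N:ℝ)) * Real.log (c0 * gG b (a j) y) := by
      intro j
      rw [Real.log_div hNinv.ne' (ne_of_gt (div_pos (hψpos j y) hS)),
        Real.log_div (ne_of_gt (hψpos j y)) (ne_of_gt hS)]
      ring
    simp only [e]
    rw [Finset.sum_sub_distrib, Finset.sum_const, Finset.card_univ, Fintype.card_fin,
      nsmul_eq_mul, Real.log_mul hNinv.ne' (ne_of_gt hS), ← mul_assoc,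
      mul_one_div, div_self hNne, one_mul, Finset.mul_sum]
  -- KL nonnegativity
  have hKLnn : ∀ y : Fin m → ℝ, 0 ≤ KLy y := by
    intro y
    have hS := hSpos y
    have hsum1 : ∑ j, (c0 * gG b (a j) y / ∑ k, c0 * gG b (a k) y) = 1 := by
      rw [← Finset.sum_div, div_self (ne_of_gt hS)]
    have hterm : ∀ j ∈ (Finset.univ : Finset (Fin N)),
        (1 / (N:ℝ)) - (c0 * gG b (a j) y / ∑ k, c0 * gG b (a k) y) ≤
        (1 / (N:ℝ)) * Real.log ((1 / (N:ℝ)) /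
          (c0 * gG b (a j) y / ∑ k, c0 * gG b (a k) y)) := by
      intro j _
      have hp : 0 < c0 * gG b (a j) y / ∑ k, c0 * gG b (a k) y :=
        div_pos (hψpos j y) hS
      set p := c0 * gG b (a j) y / ∑ k, c0 * gG b (a k) y with hpdef
      have h1 : Real.log ((N:ℝ) * p) ≤ (N:ℝ) * p - 1 :=
        Real.log_le_sub_one_of_pos (mul_pos hNR hp)
      have h2 : (1 / (N:ℝ)) / p = ((N:ℝ) * p)⁻¹ := by
        rw [one_div, mul_inv, div_eq_mul_inv]
      have h3 : 1 - (N:ℝ) * p ≤ -Real.log ((N:ℝ) * p) := by linarith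
      have hgoal : (1 / (N:ℝ)) * Real.log ((1 / (N:ℝ)) / p)
          = (1 / (N:ℝ)) * (-Real.log ((N:ℝ) * p)) := by
        rw [h2, Real.log_inv]
      rw [hgoal]
      have h4 : (1 / (N:ℝ)) - p = (1 / (N:ℝ)) * (1 - (N:ℝ) * p) := by
        rw [mul_sub, mul_one]
        congr 1
        rw [one_div, inv_mul_cancel_left₀ hNne]
      rw [h4]
      exact mul_le_mul_of_nonneg_left h3 hNinv.le
    have hsumle := Finset.sum_le_sum hterm
    have hzero : ∑ j : Fin N, ((1 / (N:ℝ)) -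
        (c0 * gG b (a j) y / ∑ k, c0 * gG b (a k) y)) = 0 := by
      rw [Finset.sum_sub_distrib, hsum1, Finset.sum_const, Finset.card_univ, Fintype.card_fin,
        nsmul_eq_mul, mul_one_div, div_self hNne, sub_self]
    rw [hKL]
    calc (0:ℝ) = ∑ j : Fin N, ((1 / (N:ℝ)) -
        (c0 * gG b (a j) y / ∑ k, c0 * gG b (a k) y)) := hzero.symm
      _ ≤ _ := hsumle
  -- integrability of ψ_i * log ψ_j
  have hIntlog : ∀ i j : Fin N, Integrable
      (fun y : Fin m → ℝ => (c0 * gG b (a i) y) * Real.log (c0 * gG b (a j) y)) := by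
    intro i j
    have e : (fun y : Fin m → ℝ => (c0 * gG b (a i) y) * Real.log (c0 * gG b (a j) y)) =
        fun y => (c0 * Real.log c0) * gG b (a i) y + (-(c0 * b)) * (qS (a j) y * gG b (a i) y) := by
      funext y
      rw [Real.log_mul (ne_of_gt hc0) (ne_of_gt (gG_pos b (a j) y)), log_gG]
      ring
    rw [e]
    exact ((gauss_int hb (a i)).const_mul _).add ((gauss_sum_sq_int hb (a i) (a j)).const_mul _)
  -- integrability of ψ_i * log((1/N) S)
  have hIntM : ∀ i : Fin N, Integrable
      (fun y : Fin m → ℝ => (c0 * gG b (a i) y) *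
        Real.log ((1 / (N:ℝ)) * ∑ k, c0 * gG b (a k) y)) := by
    intro i
    have hBint : Integrable (fun y : Fin m → ℝ => (c0 * (2 * |Real.log c0| + Real.log N)) *
        gG b (a i) y + (c0 * b) * (qS (a i) y * gG b (a i) y)) :=
      ((gauss_int hb (a i)).const_mul _).add ((gauss_sum_sq_int hb (a i) (a i)).const_mul _)
    apply Integrable.mono' hBint
    · apply Continuous.aestronglyMeasurable
      apply Continuous.mul (continuous_const.mul (gG_continuous b (a i)))
      apply Continuous.log
      · exact continuous_const.mul
          (continuous_finset_sum _ fun k _ => continuous_const.mul (gG_continuous b (a k)))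
      · exact fun y => ne_of_gt (mul_pos hNinv (hSpos y))
    · filter_upwards with y
      have hS := hSpos y
      have hlogN : 0 ≤ Real.log N := Real.log_nonneg (by exact_mod_cast hN)
      have hq : 0 ≤ qS (a i) y := qS_nonneg _ _
      have hlow : Real.log c0 - Real.log N - b * qS (a i) y ≤
          Real.log ((1 / (N:ℝ)) * ∑ k, c0 * gG b (a k) y) := by
        have h1 : (1 / (N:ℝ)) * (c0 * gG b (a i) y) ≤
            (1 / (N:ℝ)) * ∑ k, c0 * gG b (a k) y := by
          apply mul_le_mul_of_nonneg_left _ hNinv.le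
          exact Finset.single_le_sum (fun k _ => (hψpos k y).le) (Finset.mem_univ i)
        have h2 := Real.log_le_log (mul_pos hNinv (hψpos i y)) h1
        rw [Real.log_mul hNinv.ne' (ne_of_gt (hψpos i y)),
          Real.log_mul (ne_of_gt hc0) (ne_of_gt (gG_pos b (a i) y)), log_gG] at h2
        have h5 : Real.log (1/(N:ℝ)) = -Real.log N := by rw [one_div, Real.log_inv]
        linarith [h5]
      have hup : Real.log ((1 / (N:ℝ)) * ∑ k, c0 * gG b (a k) y) ≤ Real.log c0 := by
        apply Real.log_le_log (mul_pos hNinv hS)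
        have h1 : ∑ k, c0 * gG b (a k) y ≤ ∑ _k : Fin N, c0 :=
          Finset.sum_le_sum fun k _ => by
            nlinarith [gG_le_one hb.le (a k) y, gG_pos b (a k) y]
        rw [Finset.sum_const, Finset.card_univ, Fintype.card_fin, nsmul_eq_mul] at h1
        calc (1 / (N:ℝ)) * ∑ k, c0 * gG b (a k) y ≤ (1 / (N:ℝ)) * ((N:ℝ) * c0) :=
              mul_le_mul_of_nonneg_left h1 hNinv.le
          _ = c0 := by rw [one_div, inv_mul_cancel_left₀ hNne]
      have habs : |Real.log ((1 / (N:ℝ)) * ∑ k, c0 * gG b (a k) y)| ≤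
          2 * |Real.log c0| + Real.log N + b * qS (a i) y := by
        rw [abs_le]
        have hn := neg_abs_le (Real.log c0)
        have hl := le_abs_self (Real.log c0)
        have habsnn := abs_nonneg (Real.log c0)
        have hbq : 0 ≤ b * qS (a i) y := mul_nonneg hb.le hq
        constructor
        · nlinarith
        · nlinarith
      have hψnn : 0 ≤ c0 * gG b (a i) y := (hψpos i y).le
      rw [Real.norm_eq_abs, abs_mul, abs_of_nonneg hψnn]
      calc (c0 * gG b (a i) y) * |Real.log ((1 / (N:ℝ)) * ∑ k, c0 * gG b (a k) y)| ≤
            (c0 * gG b (a i) y) * (2 * |Real.log c0| + Real.log N + b * qS (a i) y) :=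
          mul_le_mul_of_nonneg_left habs hψnn
        _ = (c0 * (2 * |Real.log c0| + Real.log N)) * gG b (a i) y +
            (c0 * b) * (qS (a i) y * gG b (a i) y) := by ring
  -- integral identity per i
  have hIKL : ∀ i : Fin N, (∫ y, (c0 * gG b (a i) y) * KLy y) =
      (∫ y, (c0 * gG b (a i) y) * Real.log ((1 / (N:ℝ)) * ∑ k, c0 * gG b (a k) y))
        - (1 / (N:ℝ)) * ∑ j, ∫ y, (c0 * gG b (a i) y) * Real.log (c0 * gG b (a j) y) := by
    intro i
    have e : (fun y : Fin m → ℝ => (c0 * gG b (a i) y) * KLy y) =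
        fun y => (c0 * gG b (a i) y) * Real.log ((1 / (N:ℝ)) * ∑ k, c0 * gG b (a k) y)
          - ∑ j, (1 / (N:ℝ)) * ((c0 * gG b (a i) y) * Real.log (c0 * gG b (a j) y)) := by
      funext y
      rw [hKL' y]
      rw [show ∑ j, (1 / (N:ℝ)) * ((c0 * gG b (a i) y) * Real.log (c0 * gG b (a j) y)) =
          (1 / (N:ℝ)) * ((c0 * gG b (a i) y) * ∑ j, Real.log (c0 * gG b (a j) y)) by
        rw [Finset.mul_sum, Finset.mul_sum]]
      ring
    rw [e, integral_sub (hIntM i)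
      (integrable_finset_sum _ fun j _ => (hIntlog i j).const_mul _),
      integral_finset_sum _ fun j _ => (hIntlog i j).const_mul _]
    simp only [integral_const_mul]
    rw [← Finset.mul_sum]
  -- per-i identity in original φ form
  have hgoalint : ∀ i : Fin N, (∫ y, φ (y - W.mulVec (x i)) * KLy y)
      = ∫ y, (c0 * gG b (a i) y) * KLy y := by
    intro i
    simp only [hφv, show ∀ (i : Fin N) (y : Fin m → ℝ), φ (y - W.mulVec (x i)) = c0 * gG b (a i) y from hφv]
  have hmain : Mobj - Cobj = (1 / (N:ℝ)) * ∑ i, ∫ y, φ (y - W.mulVec (x i)) * KLy y := by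
    rw [hM, hC]
    exact alg_lemma hNne _ _ _ _ (fun i => (hgoalint i).trans (hIKL i))
  refine ⟨hmain, ?_⟩
  rw [hmain]
  apply mul_nonneg hNinv.le
  apply Finset.sum_nonneg
  intro i _
  rw [hgoalint i]
  apply integral_nonneg
  intro y
  exact mul_nonneg (hψpos i y).le (hKLnn y)
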